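/- Let ρ̂ > 1 and let 𝒳 : ℂ → Matrix (Fin n) (Fin n_t) ℂ be a matrix-valued function each of whose entries z ↦ 𝒳(z)_{ij} is complex-differentiable on the open disc {z ∈ ℂ : |z| < ρ̂}. Fix R with 1 < R < ρ̂ and an integer d ≥ 1, set ω_k = exp(2πik/d) for k = 0,…,d−1, and let X̃ = (𝒳(ω_0) + ⋯ + 𝒳(ω_{d−1}))/d. Then for every index pair (i,j): |𝒳(0)_{ij} − X̃_{ij}| ≤ (sup_{|z|=R} |𝒳(z)_{ij}|)/(R^d − 1). -/

import Mathlib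

open scoped BigOperators

private lemma roots_sum_aux (d : ℕ) (hd : 1 ≤ d) (m : ℕ) :
    ∑ k ∈ Finset.range d, Complex.exp (2 * Real.pi * Complex.I * m / d) ^ k
      = if d ∣ m then (d : ℂ) else 0 := by
  have hdC : (d : ℂ) ≠ 0 := Nat.cast_ne_zero.mpr (by omega)
  set ζ : ℂ := Complex.exp (2 * Real.pi * Complex.I * m / d) with hζ
  have hζd : ζ ^ d = 1 := by
    rw [hζ, ← Complex.exp_nat_mul]
    have : (d : ℂ) * (2 * Real.pi * Complex.I * m / d) = m * (2 * Real.pi * Complex.I) := by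
      field_simp
    rw [this, Complex.exp_nat_mul, Complex.exp_two_pi_mul_I, one_pow]
  by_cases hdvd : d ∣ m
  · obtain ⟨t, rfl⟩ := hdvd
    have : ζ = 1 := by
      rw [hζ]
      have : (2 * Real.pi * Complex.I * (d * t : ℕ) / d) = (t : ℕ) * (2 * Real.pi * Complex.I) := by
        push_cast; field_simp
      rw [this, Complex.exp_nat_mul, Complex.exp_two_pi_mul_I, one_pow]
    simp [this, Nat.dvd_mul_right]
  · have hζ1 : ζ ≠ 1 := by
      intro h
      rw [hζ, Complex.exp_eq_one_iff] at h
      obtain ⟨nn, hn⟩ := h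
      apply hdvd
      have h2πI : (2 * Real.pi * Complex.I : ℂ) ≠ 0 := by
        simp [Complex.I_ne_zero, Real.pi_ne_zero, Complex.ofReal_ne_zero]
      have hmc : (2 * Real.pi * Complex.I : ℂ) * m = (2 * Real.pi * Complex.I) * (nn * d) := by
        field_simp at hn
        linear_combination (2 * Real.pi * Complex.I) * hn
      have hmc2 : (m : ℂ) = nn * d := mul_left_cancel₀ h2πI hmc
      have hmz : (m : ℤ) = nn * d := by exact_mod_cast hmc2
      exact Int.natCast_dvd_natCast.mp ⟨nn, by linarith⟩
    rw [geom_sum_eq hζ1, hζd, sub_self, zero_div, if_neg hdvd]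

/-- Error bound for approximating 𝒳(0) by the average of 𝒳 over the d-th roots of unity,
for an entrywise analytic matrix-valued function 𝒳 on the disc of radius ρ̂. -/
theorem evaluation_interpolation_error_bound
    {n nt : ℕ} (ρhat R : ℝ) (hρhat : 1 < ρhat) (hR1 : 1 < R) (hRρ : R < ρhat)
    (X : ℂ → Matrix (Fin n) (Fin nt) ℂ)
    (hanal : ∀ i j, DifferentiableOn ℂ (fun z => X z i j) (Metric.ball (0 : ℂ) ρhat))
    (d : ℕ) (hd : 1 ≤ d)
    (Xavg : Matrix (Fin n) (Fin nt) ℂ)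
    (hXavg : Xavg = (d : ℂ)⁻¹ •
      ∑ k ∈ Finset.range d, X (Complex.exp (2 * Real.pi * Complex.I * k / d))) :
    ∀ i j, ‖X 0 i j - Xavg i j‖ ≤
      (⨆ z : Metric.sphere (0 : ℂ) R, ‖X z i j‖) / (R ^ d - 1) := by
  intro i j
  have hR0 : (0 : ℝ) < R := lt_trans one_pos hR1
  set f : ℂ → ℂ := fun z => X z i j with hfdef
  set M : ℝ := ⨆ z : Metric.sphere (0 : ℂ) R, ‖X z i j‖ with hMdef
  -- power series
  have hdiff : DifferentiableOn ℂ f (Metric.closedBall (0 : ℂ) R) :=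
    (hanal i j).mono (Metric.closedBall_subset_ball hRρ)
  have hps : HasFPowerSeriesOnBall f (cauchyPowerSeries f 0 R) 0 R.toNNReal := by
    have h := DifferentiableOn.hasFPowerSeriesOnBall (R := R.toNNReal)
      (by rwa [Real.coe_toNNReal R hR0.le]) (by simpa using hR0)
    rwa [Real.coe_toNNReal R hR0.le] at h
  set p := cauchyPowerSeries f 0 R with hpdef
  -- continuity of f on sphere, boundedness of sup
  have hcont : ContinuousOn f (Metric.sphere (0 : ℂ) R) :=
    (hanal i j).continuousOn.mono (Metric.sphere_subset_closedBall.trans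
      (Metric.closedBall_subset_ball hRρ))
  have hcont' : Continuous fun z : Metric.sphere (0 : ℂ) R => ‖f z‖ := by
    exact continuous_norm.comp
      (hcont.comp_continuous continuous_subtype_val fun z => z.2)
  have hbdd : BddAbove (Set.range fun z : Metric.sphere (0 : ℂ) R => ‖X z i j‖) :=
    (isCompact_range hcont').bddAbove
  have hle : ∀ z ∈ Metric.sphere (0 : ℂ) R, ‖f z‖ ≤ M := fun z hz =>
    le_ciSup hbdd (⟨z, hz⟩ : Metric.sphere (0 : ℂ) R)
  have hM0 : 0 ≤ M := by
    haveI : Nonempty (Metric.sphere (0 : ℂ) R) :=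
      (NormedSpace.sphere_nonempty.mpr hR0.le).to_subtype
    exact le_trans (norm_nonneg _) (le_ciSup hbdd (Classical.arbitrary _))
  -- Cauchy estimates on coefficients
  have hcoef : ∀ m : ℕ, ‖p.coeff m‖ ≤ M * (R⁻¹) ^ m := by
    intro m
    have h1 : ‖p.coeff m‖ ≤ ‖p m‖ := by
      rw [FormalMultilinearSeries.coeff]
      refine le_trans ((p m).le_opNorm _) ?_
      simp
    have h2 : ‖p m‖ ≤ ((2 * Real.pi)⁻¹ * ∫ θ : ℝ in (0)..2 * Real.pi,
        ‖f (circleMap 0 R θ)‖) * |R|⁻¹ ^ m := norm_cauchyPowerSeries_le f 0 R m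
    have hintle : (∫ θ : ℝ in (0)..2 * Real.pi, ‖f (circleMap 0 R θ)‖) ≤ 2 * Real.pi * M := by
      have hfc : Continuous fun θ : ℝ => ‖f (circleMap 0 R θ)‖ := by
        exact continuous_norm.comp (hcont.comp_continuous (continuous_circleMap 0 R)
          fun θ => circleMap_mem_sphere 0 hR0.le θ)
      calc (∫ θ : ℝ in (0)..2 * Real.pi, ‖f (circleMap 0 R θ)‖)
          ≤ ∫ _ : ℝ in (0)..2 * Real.pi, M := by
            apply intervalIntegral.integral_mono_on Real.two_pi_pos.le
              (hfc.intervalIntegrable _ _) (intervalIntegrable_const)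
            intro θ _
            exact hle _ (circleMap_mem_sphere 0 hR0.le θ)
        _ = 2 * Real.pi * M := by simp [mul_comm]
    calc ‖p.coeff m‖ ≤ ((2 * Real.pi)⁻¹ * ∫ θ : ℝ in (0)..2 * Real.pi,
          ‖f (circleMap 0 R θ)‖) * |R|⁻¹ ^ m := le_trans h1 h2
      _ ≤ ((2 * Real.pi)⁻¹ * (2 * Real.pi * M)) * |R|⁻¹ ^ m := by
          apply mul_le_mul_of_nonneg_right _ (by positivity)
          exact mul_le_mul_of_nonneg_left hintle (by positivity)
      _ = M * (R⁻¹) ^ m := by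
          rw [abs_of_pos hR0]
          field_simp
  -- expansion at points inside the ball
  have hsum : ∀ w : ℂ, ‖w‖ < R →
      HasSum (fun m : ℕ => w ^ m • p.coeff m) (f w) := by
    intro w hw
    have hmem : w ∈ Metric.eball (0 : ℂ) R.toNNReal := by
      rw [EMetric.mem_ball, edist_zero_right, enorm_eq_nnnorm, ← ENNReal.coe_lt_coe.symm]
      · simpa [← NNReal.coe_lt_coe, Real.coe_toNNReal R hR0.le] using hw
    have := hps.hasSum hmem
    rw [zero_add] at this
    simpa [FormalMultilinearSeries.apply_eq_pow_smul_coeff] using this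
  -- sum over roots of unity
  have hsum2 : HasSum (fun m : ℕ =>
      ∑ k ∈ Finset.range d, (Complex.exp (2 * Real.pi * Complex.I * k / d)) ^ m • p.coeff m)
      (∑ k ∈ Finset.range d, f (Complex.exp (2 * Real.pi * Complex.I * k / d))) := by
    apply hasSum_sum
    intro k _
    apply hsum
    have : (2 * Real.pi * Complex.I * k / d : ℂ)
        = ((2 * Real.pi * k / d : ℝ) : ℂ) * Complex.I := by push_cast; ring
    rw [this, Complex.norm_exp_ofReal_mul_I]
    exact hR1
  have hsum3 : HasSum (fun m : ℕ => (d : ℂ)⁻¹ •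
      ∑ k ∈ Finset.range d, (Complex.exp (2 * Real.pi * Complex.I * k / d)) ^ m • p.coeff m)
      (Xavg i j) := by
    have := hsum2.const_smul ((d : ℂ)⁻¹)
    convert this using 1
    rw [hXavg]
    simp [Matrix.sum_apply, Finset.smul_sum]
    exact Or.inl rfl
  -- simplify the summand using roots of unity
  have hdC : (d : ℂ) ≠ 0 := Nat.cast_ne_zero.mpr (by omega)
  have hpow : ∀ k m : ℕ, Complex.exp (2 * Real.pi * Complex.I * k / d) ^ m
      = Complex.exp (2 * Real.pi * Complex.I * m / d) ^ k := by
    intro k m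
    rw [← Complex.exp_nat_mul, ← Complex.exp_nat_mul]
    congr 1
    ring
  have hsum4 : HasSum (fun m : ℕ => if d ∣ m then p.coeff m else 0) (Xavg i j) := by
    have heq : (fun m : ℕ => (d : ℂ)⁻¹ •
        ∑ k ∈ Finset.range d, (Complex.exp (2 * Real.pi * Complex.I * k / d)) ^ m • p.coeff m)
        = fun m : ℕ => if d ∣ m then p.coeff m else 0 := by
      funext m
      simp only [hpow, smul_eq_mul, ← Finset.sum_mul, roots_sum_aux d hd m]
      by_cases hdvd : d ∣ m
      · rw [if_pos hdvd, if_pos hdvd]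
        field_simp
      · rw [if_neg hdvd, if_neg hdvd, zero_mul, mul_zero]
    rwa [heq] at hsum3
  -- reindex along multiples of d
  have hinj : Function.Injective fun t : ℕ => d * t := fun a b h => by
    simpa [Nat.mul_left_cancel_iff (show 0 < d by omega)] using h
  have hsum5 : HasSum (fun t : ℕ => p.coeff (d * t)) (Xavg i j) := by
    rw [← Function.Injective.hasSum_iff hinj ?_] at hsum4
    · refine hsum4.congr_fun fun t => ?_
      simp [Function.comp, Nat.dvd_mul_right]
    · intro x hx
      simp only [Set.mem_range, not_exists] at hx
      rw [if_neg]
      rintro ⟨t, rfl⟩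
      exact hx t rfl
  have hf0 : f 0 = p.coeff 0 := by
    have := hps.coeff_zero fun _ => (1 : ℂ)
    rw [FormalMultilinearSeries.coeff]
    exact this.symm
  have hsum6 : HasSum (fun t : ℕ => p.coeff (d * (t + 1))) (Xavg i j - f 0) := by
    have h := (hasSum_nat_add_iff' (f := fun t : ℕ => p.coeff (d * t)) 1).mpr hsum5
    simpa [hf0] using h
  -- geometric bound
  set u : ℝ := (R ^ d)⁻¹ with hudef
  have hRd1 : (1 : ℝ) < R ^ d := one_lt_pow₀ hR1 (by omega)
  have hu0 : 0 ≤ u := by positivity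
  have hu1 : u < 1 := by
    rw [hudef, inv_lt_one_iff₀]
    right; exact hRd1
  have hgeo : Summable fun t : ℕ => u ^ t := summable_geometric_of_lt_one hu0 hu1
  have hbound : ∀ t : ℕ, ‖p.coeff (d * (t + 1))‖ ≤ M * u ^ (t + 1) := by
    intro t
    calc ‖p.coeff (d * (t + 1))‖ ≤ M * (R⁻¹) ^ (d * (t + 1)) := hcoef _
      _ = M * u ^ (t + 1) := by
        rw [hudef, ← inv_pow, ← pow_mul]
  have hgeom : Summable fun t : ℕ => M * u ^ (t + 1) := by
    have := (hgeo.mul_right u).mul_left M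
    refine this.congr fun t => ?_
    rw [pow_succ]
  have hsummable : Summable fun t : ℕ => ‖p.coeff (d * (t + 1))‖ :=
    Summable.of_nonneg_of_le (fun _ => norm_nonneg _) hbound hgeom
  have h1 : ‖Xavg i j - f 0‖ ≤ ∑' t : ℕ, ‖p.coeff (d * (t + 1))‖ := by
    rw [← hsum6.tsum_eq]
    exact norm_tsum_le_tsum_norm hsummable
  have h2 : (∑' t : ℕ, ‖p.coeff (d * (t + 1))‖) ≤ ∑' t : ℕ, M * u ^ (t + 1) :=
    Summable.tsum_le_tsum hbound hsummable hgeom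
  have h3 : (∑' t : ℕ, M * u ^ (t + 1)) = M / (R ^ d - 1) := by
    have : (∑' t : ℕ, M * u ^ (t + 1)) = M * ((1 - u)⁻¹ * u) := by
      rw [tsum_mul_left]
      congr 1
      have : (∑' t : ℕ, u ^ (t + 1)) = (∑' t : ℕ, u ^ t) * u := by
        rw [← tsum_mul_right]
        exact tsum_congr fun t => (pow_succ u t)
      rw [this, tsum_geometric_of_lt_one hu0 hu1]
    rw [this, hudef]
    have hRd0 : (R : ℝ) ^ d ≠ 0 := by positivity
    have hRd1' : R ^ d - 1 ≠ 0 := by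
      intro h; rw [sub_eq_zero] at h; exact (lt_irrefl _ (h ▸ hRd1))
    field_simp
  have habs : ‖X 0 i j - Xavg i j‖ = ‖Xavg i j - f 0‖ := by
    rw [hfdef]
    exact norm_sub_rev _ _
  rw [habs]
  exact h1.trans (h2.trans_eq h3)
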